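/- Let θ' ∈ (0, 1/2) and C > 0, and let F : [0, ∞) → [0, ∞) be differentiable with F'(τ) ≤ −C·F(τ)^{2(1−θ')} + C·e^{−2τ} for all τ ≥ 0. Then there exists a constant D > 0, depending only on F(0), C, and θ', such that F(τ) ≤ D·(1 + τ)^{−1/(1−2θ')} for all τ ≥ 0. -/

import Mathlib

open Set Filter Topology

/-- **Polynomial decay from the Łojasiewicz differential inequality** (Section 9.1): if
`F : [0,∞) → [0,∞)` is differentiable with
`F'(τ) ≤ −C F(τ)^{2(1−θ')} + C e^{−2τ}` for all `τ ≥ 0`, where `θ' ∈ (0,1/2)` and `C > 0`,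
then there is `D > 0` (depending only on `F(0)`, `C`, `θ'`) with
`F(τ) ≤ D (1+τ)^{−1/(1−2θ')}` for all `τ ≥ 0`. -/
theorem stmt_9 (θ' C : ℝ) (hθ' : θ' ∈ Set.Ioo (0 : ℝ) (1 / 2)) (hC : 0 < C)
    (F F' : ℝ → ℝ)
    (hFnonneg : ∀ τ : ℝ, 0 ≤ τ → 0 ≤ F τ)
    (hFderiv : ∀ τ : ℝ, 0 ≤ τ → HasDerivWithinAt F (F' τ) (Ici (0 : ℝ)) τ)
    (hineq : ∀ τ : ℝ, 0 ≤ τ →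
      F' τ ≤ -C * F τ ^ (2 * (1 - θ')) + C * Real.exp (-2 * τ)) :
    ∃ D : ℝ, 0 < D ∧ ∀ τ : ℝ, 0 ≤ τ →
      F τ ≤ D * (1 + τ) ^ (-(1 / (1 - 2 * θ'))) := by
  obtain ⟨hθ0, hθh⟩ := hθ'
  have hβ0' : (0:ℝ) < 1 - 2*θ' := by linarith
  set β : ℝ := 1 - 2*θ' with hβdef
  have hβ0 : 0 < β := hβ0'
  set α : ℝ := 1/β with hαdef
  have hα0 : 0 < α := by positivity
  have hαβ : α * β = 1 := by rw [hαdef]; field_simp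
  set p : ℝ := 2*(1-θ') with hpdef
  have hp1 : p = 1 + β := by rw [hpdef, hβdef]; ring
  have hp0 : 0 < p := by rw [hp1]; linarith
  have hαp : α * p = α + 1 := by
    have : α * p = α + α * β := by rw [hp1]; ring
    rw [this, hαβ]
  -- the constant M bounding exp (-2s) * (1+s)^(α+1)
  set M : ℝ := Real.exp ((α+1) * Real.log (α+1)) with hMdef
  have hM0 : 0 < M := Real.exp_pos _
  have hMbound : ∀ s : ℝ, 0 ≤ s → Real.exp (-2*s) * (1+s) ^ (α+1) ≤ M := by
    intro s hs
    have h1s : (0:ℝ) < 1 + s := by linarith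
    have hα1 : (0:ℝ) < α + 1 := by linarith
    have hlog : Real.log ((1+s)/(α+1)) ≤ (1+s)/(α+1) - 1 :=
      Real.log_le_sub_one_of_pos (by positivity)
    have hlog2 : Real.log (1+s) ≤ (1+s)/(α+1) - 1 + Real.log (α+1) := by
      rw [Real.log_div h1s.ne' hα1.ne'] at hlog; linarith
    have hlog3 : (α+1) * Real.log (1+s) ≤ s + (α+1) * Real.log (α+1) := by
      have h3 := mul_le_mul_of_nonneg_left hlog2 hα1.le
      have h4 : (α+1) * ((1+s)/(α+1) - 1 + Real.log (α+1))
          = (1+s) - (α+1) + (α+1) * Real.log (α+1) := by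
        field_simp
      rw [h4] at h3
      linarith
    have hrw : (1+s) ^ (α+1) = Real.exp ((α+1) * Real.log (1+s)) := by
      rw [Real.rpow_def_of_pos h1s, mul_comm]
    rw [hrw, ← Real.exp_add, hMdef]
    exact Real.exp_le_exp.mpr (by linarith)
  -- choice of the constant D
  set D : ℝ := max (max (F 0 + 1) 1) (max ((2*M) ^ (1/p) + 1) ((2*α/C) ^ α + 1)) with hDdef
  have hD1 : 1 ≤ D := le_trans (le_max_right _ 1) (le_max_left _ _)
  have hD0 : (0:ℝ) < D := lt_of_lt_of_le one_pos hD1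
  have hDF : F 0 < D :=
    lt_of_lt_of_le (lt_add_one _) (le_trans (le_max_left _ _) (le_max_left _ _))
  have hD2M : 2*M < D ^ p := by
    have h1 : (2*M) ^ (1/p) < D :=
      lt_of_lt_of_le (lt_add_one _) (le_trans (le_max_left _ _) (le_max_right _ _))
    have h2 : ((2*M) ^ (1/p)) ^ p < D ^ p :=
      Real.rpow_lt_rpow (Real.rpow_nonneg (by positivity) _) h1 hp0
    have h3 : ((2*M) ^ (1/p)) ^ p = 2*M := by
      rw [← Real.rpow_mul (by positivity), one_div_mul_cancel hp0.ne', Real.rpow_one]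
    rwa [h3] at h2
  have hDα : 2*α/C < D ^ β := by
    have h1 : (2*α/C) ^ α < D :=
      lt_of_lt_of_le (lt_add_one _) (le_trans (le_max_right _ _) (le_max_right _ _))
    have h2 : ((2*α/C) ^ α) ^ β < D ^ β :=
      Real.rpow_lt_rpow (Real.rpow_nonneg (by positivity) _) h1 hβ0
    rwa [← Real.rpow_mul (by positivity), hαβ, Real.rpow_one] at h2
  have hKey : C * M < C * D ^ p - α * D := by
    have hDp_split : D ^ p = D ^ β * D := by
      rw [hp1, Real.rpow_add hD0, Real.rpow_one]; ring
    have hhalf2 : 2*(α*D) ≤ C * D ^ p := by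
      rw [hDp_split]
      have h5 : 2*α < D ^ β * C := (div_lt_iff₀ hC).mp hDα
      nlinarith [hD0.le]
    have hhalf1 : 2*(C*M) < C * D ^ p := by nlinarith
    linarith
  -- the barrier G and its derivative
  set G : ℝ → ℝ := fun t => D * (1+t) ^ (-α) with hGdef
  have hGderiv : ∀ t : ℝ, 0 ≤ t → HasDerivAt G (-(α*D) * (1+t) ^ (-(α+1))) t := by
    intro t ht
    have h1t : (0:ℝ) < 1 + t := by linarith
    have hinner : HasDerivAt (fun x : ℝ => 1 + x) 1 t := by
      simpa using (hasDerivAt_id t).const_add 1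
    have houter := Real.hasDerivAt_rpow_const (x := 1+t) (p := -α) (Or.inl h1t.ne')
    have hcomp := (houter.comp t hinner).const_mul D
    have e : -(α*D) * (1+t) ^ (-(α+1)) = D * (-α * (1 + t) ^ (-α - 1) * 1) := by
      rw [show -α - 1 = -(α+1) by ring]
      ring
    rw [e]
    exact hcomp
  refine ⟨D, hD0, ?_⟩
  have main : ∀ τ0 : ℝ, 0 ≤ τ0 → F τ0 - G τ0 ≤ 0 := by
    by_contra hcon
    push_neg at hcon
    obtain ⟨τ0, hτ00, hpos⟩ := hcon
    have hFcont : ContinuousOn F (Ici 0) := fun t ht => (hFderiv t ht).continuousWithinAt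
    have hGcont : ContinuousOn G (Ici 0) := fun t ht =>
      ((hGderiv t ht).continuousAt).continuousWithinAt
    set h : ℝ → ℝ := fun t => F t - G t with hhdef
    have hhcont : ContinuousOn h (Icc 0 τ0) :=
      (hFcont.sub hGcont).mono Icc_subset_Ici_self
    set K : Set ℝ := Icc 0 τ0 ∩ h ⁻¹' (Iic 0) with hKdef
    have hKclosed : IsClosed K :=
      hhcont.preimage_isClosed_of_isClosed isClosed_Icc isClosed_Iic
    have hG0 : G 0 = D := by simp [hGdef]
    have h0K : (0:ℝ) ∈ K := by
      refine ⟨⟨le_refl _, hτ00⟩, ?_⟩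
      simp only [mem_preimage, mem_Iic, hhdef, hG0]
      linarith
    have hKbdd : BddAbove K := BddAbove.mono (fun t ht => ht.1) bddAbove_Icc
    set s : ℝ := sSup K with hsdef
    have hsK : s ∈ K := hKclosed.csSup_mem ⟨0, h0K⟩ hKbdd
    have hs0 : 0 ≤ s := hsK.1.1
    have hsτ0 : s ≤ τ0 := hsK.1.2
    have hhs_le : h s ≤ 0 := hsK.2
    have hslt : s < τ0 := by
      rcases lt_or_eq_of_le hsτ0 with h' | h'
      · exact h'
      · exfalso; rw [h'] at hhs_le; simp only [hhdef] at hhs_le; linarith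
    have hafter : ∀ t ∈ Ioc s τ0, 0 < h t := by
      rintro t ⟨hts, htτ0⟩
      by_contra hle
      push_neg at hle
      have htK : t ∈ K := ⟨⟨le_trans hs0 hts.le, htτ0⟩, hle⟩
      exact absurd (le_csSup hKbdd htK) (not_le.mpr hts)
    -- h s = 0
    have hIoc : Ioc s τ0 ∈ 𝓝[>] s := Ioc_mem_nhdsGT_of_mem ⟨le_rfl, hslt⟩
    have hfle : 𝓝[>] s ≤ 𝓝[Icc 0 τ0] s := by
      rw [nhdsWithin]
      exact le_inf nhdsWithin_le_nhds
        (le_principal_iff.mpr (mem_of_superset hIoc (fun t ht => ⟨le_trans hs0 ht.1.le, ht.2⟩)))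
    have htend : Tendsto h (𝓝[>] s) (𝓝 (h s)) :=
      (hhcont s ⟨hs0, hsτ0⟩).mono_left hfle
    have hge : 0 ≤ h s :=
      ge_of_tendsto htend (by filter_upwards [hIoc] with t ht using (hafter t ht).le)
    have hhs : h s = 0 := le_antisymm hhs_le hge
    have hFs : F s = G s := by
      have : F s - G s = 0 := hhs
      linarith
    -- derivative comparison at s
    have h1s : (0:ℝ) < 1 + s := by linarith
    set E : ℝ := (1+s) ^ (-(α+1)) with hEdef
    have hE0 : 0 < E := Real.rpow_pos_of_pos h1s _
    have hFp : F s ^ p = D ^ p * E := by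
      rw [hFs]
      show (D * (1+s) ^ (-α)) ^ p = D ^ p * E
      rw [Real.mul_rpow hD0.le (Real.rpow_nonneg h1s.le _),
        ← Real.rpow_mul h1s.le, show (-α) * p = -(α+1) by rw [neg_mul, hαp], hEdef]
    have hF'le : F' s ≤ -C * (D ^ p * E) + C * Real.exp (-2*s) := by
      have := hineq s hs0
      rwa [hFp] at this
    have hPE : (1+s) ^ (α+1) * E = 1 := by
      rw [hEdef, ← Real.rpow_add h1s, show α+1 + -(α+1) = 0 by ring, Real.rpow_zero]
    have hexpE : Real.exp (-2*s) ≤ M * E := by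
      have hb := hMbound s hs0
      have h1 : Real.exp (-2*s) = (Real.exp (-2*s) * (1+s) ^ (α+1)) * E := by
        rw [mul_assoc, hPE, mul_one]
      rw [h1]
      exact mul_le_mul_of_nonneg_right hb hE0.le
    have hlt : F' s < -(α*D) * E := by
      have h3 : C * M * E < (C * D ^ p - α * D) * E := mul_lt_mul_of_pos_right hKey hE0
      have h4 : C * Real.exp (-2*s) ≤ C * (M * E) := mul_le_mul_of_nonneg_left hexpE hC.le
      calc F' s ≤ -C * (D ^ p * E) + C * Real.exp (-2*s) := hF'le
        _ ≤ -C * (D ^ p * E) + C * (M * E) := by linarith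
        _ = -C * (D ^ p * E) + C * M * E := by ring
        _ < -C * (D ^ p * E) + (C * D ^ p - α * D) * E := by linarith
        _ = -(α*D) * E := by ring
    -- contradiction via the slope
    have hh' : HasDerivWithinAt h (F' s - -(α*D) * E) (Ici s) s :=
      ((hFderiv s hs0).mono (Ici_subset_Ici.mpr hs0)).sub (hGderiv s hs0).hasDerivWithinAt
    rw [hasDerivWithinAt_iff_tendsto_slope, Ici_sdiff_left] at hh'
    have hneg : F' s - -(α*D) * E < 0 := by linarith
    have hev1 : ∀ᶠ t in 𝓝[>] s, slope h s t < 0 := hh'.eventually_lt_const hneg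
    have hev2 : ∀ᶠ t in 𝓝[>] s, 0 < slope h s t := by
      filter_upwards [hIoc] with t ht
      rw [slope_def_field]
      exact div_pos (by have := hafter t ht; linarith) (by linarith [ht.1])
    obtain ⟨t, ht1, ht2⟩ := (hev1.and hev2).exists
    linarith
  intro τ hτ
  have := main τ hτ
  simp only [hGdef] at this
  linarith
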